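/- Let y* ∈ [2,3], ρ₀ > 1/3, T > 0, and let (ρ, ω) be a left solution with data ρ₀ on [0, T). Then for all z ∈ (0, T): ω(z) > 1/3; ρ(z) + ω(z) < ρ₀ + 1/3; ρ(z)·ω(z) < ρ₀/3; ρ(z) > ω(z); and ρ'(z) < 0. -/

import Mathlib

open Set Filter


/-- The rescaled self-similar isothermal Euler–Poisson system with parameter `y = y*`,
at the point `z`. -/
def EPSys (y : ℝ) (ρ ω : ℝ → ℝ) (z : ℝ) : Prop :=
  deriv ρ z =
    -(2 * y ^ 2 * z * ω z * ρ z * (ρ z - ω z)) / (1 - y ^ 2 * z ^ 2 * (ω z) ^ 2) ∧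
  deriv ω z =
    (1 - 3 * ω z) / z +
      2 * y ^ 2 * z * (ω z) ^ 2 * (ρ z - ω z) / (1 - y ^ 2 * z ^ 2 * (ω z) ^ 2)

/-- A left solution with data `ρ₀` on `[0, T)`: continuous on `[0,T)`, real analytic
near the origin, with `ρ(0) = ρ₀`, `ω(0) = 1/3`, differentiable on `(0,T)` where it
solves the system and stays subsonic. -/
def LeftSol (y ρ₀ T : ℝ) (ρ ω : ℝ → ℝ) : Prop :=
  ContinuousOn ρ (Set.Ico 0 T) ∧ ContinuousOn ω (Set.Ico 0 T) ∧
  AnalyticAt ℝ ρ 0 ∧ AnalyticAt ℝ ω 0 ∧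
  ρ 0 = ρ₀ ∧ ω 0 = 1 / 3 ∧
  (∀ z ∈ Set.Ioo (0 : ℝ) T,
    DifferentiableAt ℝ ρ z ∧ DifferentiableAt ℝ ω z ∧ EPSys y ρ ω z) ∧
  (∀ z ∈ Set.Ioo (0 : ℝ) T, 0 < 1 - y ^ 2 * z ^ 2 * (ω z) ^ 2)

set_option maxHeartbeats 1000000 in
/-- A priori bounds for left solutions with data `ρ₀ > 1/3`. -/
theorem left_solution_apriori_bounds
    (y ρ₀ T : ℝ) (hy : y ∈ Set.Icc (2 : ℝ) 3) (hρ₀ : 1 / 3 < ρ₀) (hT : 0 < T)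
    (ρ ω : ℝ → ℝ) (h : LeftSol y ρ₀ T ρ ω) :
    ∀ z ∈ Set.Ioo (0 : ℝ) T,
      1 / 3 < ω z ∧
      ρ z + ω z < ρ₀ + 1 / 3 ∧
      ρ z * ω z < ρ₀ / 3 ∧
      ω z < ρ z ∧
      deriv ρ z < 0 := by
  obtain ⟨hρc, hωc, -, -, hρ0, hω0, hdiff, hsub⟩ := h
  have hy2 : (0:ℝ) < y ^ 2 := by nlinarith [hy.1]
  -- deriv ω is positive wherever ω ≤ 1/3 and ρ - ω > 0
  have derivpos : ∀ c ∈ Set.Ioo (0:ℝ) T, 0 < ρ c - ω c → ω c ≤ 1/3 → 0 < deriv ω c := by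
    intro c hc hfc hωle
    have hD := hsub c hc
    have hEPc := (hdiff c hc).2.2
    rw [hEPc.2]
    rcases lt_or_eq_of_le hωle with hlt | heq
    · have h1 : 0 < (1 - 3 * ω c) / c := div_pos (by linarith) hc.1
      have h2 : 0 ≤ 2 * y ^ 2 * c * ω c ^ 2 * (ρ c - ω c) / (1 - y ^ 2 * c ^ 2 * ω c ^ 2) := by
        apply div_nonneg _ hD.le
        exact mul_nonneg (mul_nonneg (mul_nonneg (by linarith : (0:ℝ) ≤ 2 * y ^ 2) hc.1.le) (sq_nonneg _)) hfc.le
      linarith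
    · have h1 : (1 - 3 * ω c) / c = 0 := by rw [heq]; norm_num
      have hω2 : 0 < ω c ^ 2 := by rw [heq]; norm_num
      have h2 : 0 < 2 * y ^ 2 * c * ω c ^ 2 * (ρ c - ω c) / (1 - y ^ 2 * c ^ 2 * ω c ^ 2) := by
        apply div_pos _ hD
        exact mul_pos (mul_pos (mul_pos (by linarith : (0:ℝ) < 2 * y ^ 2) hc.1) hω2) hfc
      linarith
  -- wherever ρ - ω > 0 on (0, z₀], we get ω > 1/3
  have minlem : ∀ z₀ ∈ Set.Ioo (0:ℝ) T, (∀ x ∈ Set.Ioc (0:ℝ) z₀, 0 < ρ x - ω x) →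
      1/3 < ω z₀ := by
    intro z₀ hz₀ hf
    by_contra hle
    push_neg at hle
    have hIcc : Set.Icc (0:ℝ) z₀ ⊆ Set.Ico 0 T := fun x hx => ⟨hx.1, lt_of_le_of_lt hx.2 hz₀.2⟩
    obtain ⟨c, hcmem, hcmin⟩ :=
      isCompact_Icc.exists_isMinOn ⟨0, Set.left_mem_Icc.mpr hz₀.1.le⟩ (hωc.mono hIcc)
    have hcmin' : ∀ x ∈ Set.Icc (0:ℝ) z₀, ω c ≤ ω x := fun x hx => hcmin hx
    obtain ⟨c', hc'mem, hc'min, hc'le⟩ :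
        ∃ c' ∈ Set.Ioc (0:ℝ) z₀, (∀ x ∈ Set.Icc (0:ℝ) z₀, ω c' ≤ ω x) ∧ ω c' ≤ 1/3 := by
      rcases eq_or_lt_of_le hcmem.1 with h0 | h0
      · refine ⟨z₀, ⟨hz₀.1, le_refl _⟩, fun x hx => ?_, hle⟩
        have hx3 := hcmin' x hx
        rw [← h0, hω0] at hx3
        linarith
      · exact ⟨c, ⟨h0, hcmem.2⟩, hcmin',
          le_trans (hcmin' z₀ (Set.right_mem_Icc.mpr hz₀.1.le)) hle⟩
    have hc'T : c' ∈ Set.Ioo (0:ℝ) T := ⟨hc'mem.1, lt_of_le_of_lt hc'mem.2 hz₀.2⟩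
    have hdpos : 0 < deriv ω c' := derivpos c' hc'T (hf c' hc'mem) hc'le
    have hd := (hdiff c' hc'T).2.1.hasDerivAt
    rw [hasDerivAt_iff_tendsto_slope] at hd
    have hnonpos : deriv ω c' ≤ 0 := by
      have hss : Set.Iio c' ⊆ {x | x ≠ c'} := fun x hx => ne_of_lt hx
      refine le_of_tendsto (hd.mono_left (nhdsWithin_mono _ hss)) ?_
      filter_upwards [Ioo_mem_nhdsLT_of_mem
        (Set.right_mem_Ioc.mpr hc'mem.1 : c' ∈ Set.Ioc (0:ℝ) c')] with x hx
      rw [slope_def_field]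
      apply div_nonpos_of_nonneg_of_nonpos
      · have hx' : x ∈ Set.Icc (0:ℝ) z₀ := ⟨hx.1.le, hx.2.le.trans hc'mem.2⟩
        linarith [hc'min x hx']
      · linarith [hx.2]
    linarith
  -- ρ - ω > 0 near 0
  have h0mem : (0:ℝ) ∈ Set.Ico (0:ℝ) T := ⟨le_refl _, hT⟩
  have hc0 : ContinuousWithinAt (fun x => ρ x - ω x) (Set.Ico 0 T) 0 :=
    (hρc 0 h0mem).sub (hωc 0 h0mem)
  have hval : (0:ℝ) < ρ 0 - ω 0 := by rw [hρ0, hω0]; linarith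
  have hmem : (fun x => ρ x - ω x) ⁻¹' Set.Ioi 0 ∈ nhdsWithin 0 (Set.Ico 0 T) :=
    hc0 (Ioi_mem_nhds hval)
  rw [Metric.mem_nhdsWithin_iff] at hmem
  obtain ⟨ε, hε, hball⟩ := hmem
  have hδpos : (0:ℝ) < min ε T := lt_min hε hT
  have hnear : ∀ x : ℝ, 0 < x → x < min ε T → 0 < ρ x - ω x := by
    intro x hx1 hx2
    have hx' : x ∈ Metric.ball (0:ℝ) ε ∩ Set.Ico 0 T := by
      constructor
      · rw [Metric.mem_ball, Real.dist_eq, sub_zero, abs_of_pos hx1]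
        exact lt_of_lt_of_le hx2 (min_le_left _ _)
      · exact ⟨hx1.le, lt_of_lt_of_le hx2 (min_le_right _ _)⟩
    exact hball hx'
  -- main claim: ρ - ω > 0 on all of (0, T)
  have hfall : ∀ z ∈ Set.Ioo (0:ℝ) T, 0 < ρ z - ω z := by
    by_contra hcon
    push_neg at hcon
    obtain ⟨b₀, hb₀, hb₀f⟩ := hcon
    have hb₀f' : ρ b₀ - ω b₀ ≤ 0 := by linarith
    set B := {x : ℝ | x ∈ Set.Ioo (0:ℝ) T ∧ ρ x - ω x ≤ 0} with hB
    have hBne : B.Nonempty := ⟨b₀, hb₀, hb₀f'⟩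
    have hBbdd : BddBelow B := ⟨0, fun x hx => hx.1.1.le⟩
    set z₁ := sInf B with hz₁
    have hδle : ∀ x ∈ B, min ε T ≤ x := by
      intro x hx
      by_contra hlt
      push_neg at hlt
      linarith [hnear x hx.1.1 hlt, hx.2]
    have hz₁δ : min ε T ≤ z₁ := le_csInf hBne hδle
    have hz₁pos : 0 < z₁ := lt_of_lt_of_le hδpos hz₁δ
    have hz₁T : z₁ < T := lt_of_le_of_lt (csInf_le hBbdd ⟨hb₀, hb₀f'⟩) hb₀.2
    have hfpos : ∀ x ∈ Set.Ioo (0:ℝ) z₁, 0 < ρ x - ω x := by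
      intro x hx
      by_contra hxle
      push_neg at hxle
      have hxB : x ∈ B := ⟨⟨hx.1, lt_trans hx.2 hz₁T⟩, hxle⟩
      exact absurd (csInf_le hBbdd hxB) (not_le.mpr hx.2)
    have hfz₁ : ρ z₁ - ω z₁ ≤ 0 := by
      by_contra hpos
      push_neg at hpos
      have hca : ContinuousAt (fun x => ρ x - ω x) z₁ :=
        ((hdiff z₁ ⟨hz₁pos, hz₁T⟩).1.continuousAt).sub
          ((hdiff z₁ ⟨hz₁pos, hz₁T⟩).2.1.continuousAt)
      have hev : ∀ᶠ x in nhds z₁, 0 < ρ x - ω x := hca (Ioi_mem_nhds hpos)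
      rw [Metric.eventually_nhds_iff] at hev
      obtain ⟨η, hη, hb⟩ := hev
      have hlow : ∀ x ∈ B, z₁ + η ≤ x := by
        intro x hx
        by_contra hlt
        push_neg at hlt
        have hge : z₁ ≤ x := csInf_le hBbdd hx
        have hxb : dist x z₁ < η := by
          rw [Real.dist_eq, abs_of_nonneg (by linarith)]
          linarith
        linarith [hb hxb, hx.2]
      have := le_csInf hBne hlow
      linarith
    -- ω > 1/3 on (0, z₁)
    have hω13 : ∀ x ∈ Set.Ioo (0:ℝ) z₁, 1/3 < ω x := by
      intro x hx
      exact minlem x ⟨hx.1, lt_trans hx.2 hz₁T⟩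
        (fun u hu => hfpos u ⟨hu.1, lt_of_le_of_lt hu.2 hx.2⟩)
    -- Grönwall on [z₁/2, z₁]
    set a := z₁ / 2 with ha_def
    have ha : 0 < a := by positivity
    have haz : a < z₁ := by linarith
    have hIccsub : Set.Icc a z₁ ⊆ Set.Ioo (0:ℝ) T :=
      fun x hx => ⟨lt_of_lt_of_le ha hx.1, lt_of_le_of_lt hx.2 hz₁T⟩
    have hIccsub' : Set.Icc a z₁ ⊆ Set.Ico (0:ℝ) T :=
      fun x hx => ⟨(hIccsub hx).1.le, (hIccsub hx).2⟩
    have hcρ : ContinuousOn ρ (Set.Icc a z₁) := hρc.mono hIccsub'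
    have hcω : ContinuousOn ω (Set.Icc a z₁) := hωc.mono hIccsub'
    have hKc : ContinuousOn
        (fun x => 2 * y ^ 2 * x * ω x * (ρ x + ω x) / (1 - y ^ 2 * x ^ 2 * (ω x) ^ 2))
        (Set.Icc a z₁) := by
      apply ContinuousOn.div
      · exact ((continuousOn_const.mul continuousOn_id).mul hcω).mul (hcρ.add hcω)
      · exact continuousOn_const.sub
          ((continuousOn_const.mul (continuousOn_id.pow 2)).mul (hcω.pow 2))
      · exact fun x hx => (hsub x (hIccsub hx)).ne'
    obtain ⟨C, hC⟩ := isCompact_Icc.exists_bound_of_continuousOn hKc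
    have hC' : ∀ x ∈ Set.Icc a z₁,
        2 * y ^ 2 * x * ω x * (ρ x + ω x) / (1 - y ^ 2 * x ^ 2 * (ω x) ^ 2) ≤ C :=
      fun x hx => le_trans (le_abs_self _)
        (by have := hC x hx; rwa [Real.norm_eq_abs] at this)
    have hFmono : StrictMonoOn (fun x => (ρ x - ω x) * Real.exp (C * x)) (Set.Icc a z₁) := by
      apply strictMonoOn_of_deriv_pos (convex_Icc a z₁)
      · exact (hcρ.sub hcω).mul
          ((Real.continuous_exp.comp (continuous_const.mul continuous_id)).continuousOn)
      · intro x hx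
        rw [interior_Icc] at hx
        have hxT : x ∈ Set.Ioo (0:ℝ) T := hIccsub ⟨hx.1.le, hx.2.le⟩
        obtain ⟨hρd, hωd, hEPx⟩ := hdiff x hxT
        have hD := hsub x hxT
        have hx0 : (0:ℝ) < x := hxT.1
        have hfx : 0 < ρ x - ω x := hfpos x ⟨hx0, hx.2⟩
        have hωx : 1/3 < ω x := hω13 x ⟨hx0, hx.2⟩
        have hEd : HasDerivAt (fun u => (ρ u - ω u) * Real.exp (C * u))
            ((deriv ρ x - deriv ω x) * Real.exp (C * x) +
              (ρ x - ω x) * (Real.exp (C * x) * (C * 1))) x := by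
          exact ((hρd.hasDerivAt).sub (hωd.hasDerivAt)).mul
            (((hasDerivAt_id x).const_mul C).exp)
        rw [hEd.deriv]
        have hfd : deriv ρ x - deriv ω x =
            (3 * ω x - 1) / x -
              (2 * y ^ 2 * x * ω x * (ρ x + ω x) / (1 - y ^ 2 * x ^ 2 * (ω x) ^ 2)) *
                (ρ x - ω x) := by
          rw [hEPx.1, hEPx.2]
          field_simp
          ring
        rw [hfd]
        have hKx := hC' x ⟨hx.1.le, hx.2.le⟩
        have hterm : 0 < (3 * ω x - 1) / x := div_pos (by linarith) hx0
        have hexp : 0 < Real.exp (C * x) := Real.exp_pos _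
        set Kx := 2 * y ^ 2 * x * ω x * (ρ x + ω x) / (1 - y ^ 2 * x ^ 2 * (ω x) ^ 2) with hKdef
        have hmul : 0 ≤ (C - Kx) * (ρ x - ω x) := mul_nonneg (by linarith) hfx.le
        nlinarith [mul_pos hterm hexp, mul_nonneg hmul hexp.le]
    have hFlt : (ρ a - ω a) * Real.exp (C * a) < (ρ z₁ - ω z₁) * Real.exp (C * z₁) :=
      hFmono (Set.left_mem_Icc.mpr haz.le) (Set.right_mem_Icc.mpr haz.le) haz
    have hFa : 0 < (ρ a - ω a) * Real.exp (C * a) :=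
      mul_pos (hfpos a ⟨ha, haz⟩) (Real.exp_pos _)
    have hFz : (ρ z₁ - ω z₁) * Real.exp (C * z₁) ≤ 0 :=
      mul_nonpos_of_nonpos_of_nonneg hfz₁ (Real.exp_pos _).le
    linarith
  have hωall : ∀ z ∈ Set.Ioo (0:ℝ) T, 1/3 < ω z := by
    intro z hz
    exact minlem z hz (fun u hu => hfall u ⟨hu.1, lt_of_le_of_lt hu.2 hz.2⟩)
  -- final conclusions
  intro z hz
  have hfz : 0 < ρ z - ω z := hfall z hz
  have hωz : 1/3 < ω z := hωall z hz
  have hIcc : Set.Icc (0:ℝ) z ⊆ Set.Ico (0:ℝ) T := fun x hx => ⟨hx.1, lt_of_le_of_lt hx.2 hz.2⟩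
  have h0m : (0:ℝ) ∈ Set.Icc (0:ℝ) z := Set.left_mem_Icc.mpr hz.1.le
  have hzm : z ∈ Set.Icc (0:ℝ) z := Set.right_mem_Icc.mpr hz.1.le
  -- sum strictly decreasing
  have hsum : ρ z + ω z < ρ₀ + 1/3 := by
    have hanti : StrictAntiOn (fun x => ρ x + ω x) (Set.Icc 0 z) := by
      apply strictAntiOn_of_deriv_neg (convex_Icc 0 z) ((hρc.mono hIcc).add (hωc.mono hIcc))
      intro x hx
      rw [interior_Icc] at hx
      have hxT : x ∈ Set.Ioo (0:ℝ) T := ⟨hx.1, lt_trans hx.2 hz.2⟩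
      obtain ⟨hρd, hωd, hEPx⟩ := hdiff x hxT
      have hD := hsub x hxT
      have hfx := hfall x hxT
      have hωx := hωall x hxT
      have hx0 : (0:ℝ) < x := hx.1
      have hd : deriv (ρ + ω) x = deriv ρ x + deriv ω x :=
        ((hρd.hasDerivAt).add (hωd.hasDerivAt)).deriv
      rw [hd, hEPx.1, hEPx.2]
      have e : -(2 * y ^ 2 * x * ω x * ρ x * (ρ x - ω x)) / (1 - y ^ 2 * x ^ 2 * (ω x) ^ 2) +
          ((1 - 3 * ω x) / x +
            2 * y ^ 2 * x * (ω x) ^ 2 * (ρ x - ω x) / (1 - y ^ 2 * x ^ 2 * (ω x) ^ 2)) =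
          ((1 - 3 * ω x) * (1 - y ^ 2 * x ^ 2 * (ω x) ^ 2) -
            2 * y ^ 2 * x ^ 2 * ω x * (ρ x - ω x) ^ 2) / (x * (1 - y ^ 2 * x ^ 2 * (ω x) ^ 2)) := by
        field_simp
        ring
      rw [e]
      apply div_neg_of_neg_of_pos
      · have h1 : (1 - 3 * ω x) * (1 - y ^ 2 * x ^ 2 * (ω x) ^ 2) < 0 :=
          mul_neg_of_neg_of_pos (by linarith) hD
        have h2 : 0 < 2 * y ^ 2 * x ^ 2 * ω x * (ρ x - ω x) ^ 2 :=
          mul_pos (mul_pos (mul_pos (by linarith : (0:ℝ) < 2 * y ^ 2) (pow_pos hx0 2))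
            (by linarith : (0:ℝ) < ω x)) (pow_pos hfx 2)
        linarith
      · exact mul_pos hx0 hD
    have hlt : ρ z + ω z < ρ 0 + ω 0 := hanti h0m hzm hz.1
    rw [hρ0, hω0] at hlt
    linarith
  -- product strictly decreasing
  have hprod : ρ z * ω z < ρ₀ / 3 := by
    have hanti : StrictAntiOn (fun x => ρ x * ω x) (Set.Icc 0 z) := by
      apply strictAntiOn_of_deriv_neg (convex_Icc 0 z) ((hρc.mono hIcc).mul (hωc.mono hIcc))
      intro x hx
      rw [interior_Icc] at hx
      have hxT : x ∈ Set.Ioo (0:ℝ) T := ⟨hx.1, lt_trans hx.2 hz.2⟩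
      obtain ⟨hρd, hωd, hEPx⟩ := hdiff x hxT
      have hD := hsub x hxT
      have hfx := hfall x hxT
      have hωx := hωall x hxT
      have hx0 : (0:ℝ) < x := hx.1
      have hρpos : 0 < ρ x := by linarith
      have hd : deriv (ρ * ω) x = deriv ρ x * ω x + ρ x * deriv ω x :=
        ((hρd.hasDerivAt).mul (hωd.hasDerivAt)).deriv
      rw [hd, hEPx.1, hEPx.2]
      have e : -(2 * y ^ 2 * x * ω x * ρ x * (ρ x - ω x)) / (1 - y ^ 2 * x ^ 2 * (ω x) ^ 2) * ω x +
          ρ x * ((1 - 3 * ω x) / x +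
            2 * y ^ 2 * x * (ω x) ^ 2 * (ρ x - ω x) / (1 - y ^ 2 * x ^ 2 * (ω x) ^ 2)) =
          ρ x * (1 - 3 * ω x) / x := by
        field_simp
        ring
      rw [e]
      exact div_neg_of_neg_of_pos (mul_neg_of_pos_of_neg hρpos (by linarith)) hx0
    have hlt : ρ z * ω z < ρ 0 * ω 0 := hanti h0m hzm hz.1
    rw [hρ0, hω0] at hlt
    linarith
  -- deriv ρ z < 0
  have hdρ : deriv ρ z < 0 := by
    have hD := hsub z hz
    have hEPz := (hdiff z hz).2.2
    rw [hEPz.1]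
    apply div_neg_of_neg_of_pos _ hD
    have hnum : 0 < 2 * y ^ 2 * z * ω z * ρ z * (ρ z - ω z) :=
      mul_pos (mul_pos (mul_pos (mul_pos (by linarith : (0:ℝ) < 2 * y ^ 2) hz.1)
        (by linarith)) (by linarith)) hfz
    linarith
  exact ⟨hωz, hsum, hprod, by linarith, hdρ⟩
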